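/- Fix reals a < b. With 𝒢(w,p_w,φ,p_φ) := (∂ₓw, p_w, ∂ₓφ, p_φ, ∂ₓw − φ), Πᴱ(z₁,z₂,z₃,z₄,z₅) := (z₁,z₂,z₃,0,0), and ℱ(z₁,…,z₅) := (W, z₂, z₁ − z₅, z₄) where W(x) := ∫ₐˣ z₁(s) ds − (1/(b−a)) ∫ₐᵇ ( ∫ₐʸ z₁(s) ds ) dy: for every tuple (w,p_w,φ,p_φ) with w, φ continuously differentiable on ℝ and ∫ₐᵇ w(x) dx = 0, one has ℱ( Πᴱ( 𝒢(w,p_w,φ,p_φ) ) ) = (w, p_w, ∂ₓw, 0) on [a,b]; that is, ℱ ∘ Πᴱ ∘ 𝒢 equals the implicit projection Πᴵ(w,p_w,φ,p_φ) = (w, p_w, ∂ₓw, 0), so the diagram formed by the explicit/implicit transformations and the flow-constraint projections commutes. -/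

import Mathlib

/-- Implicit-to-explicit Timoshenko state transformation `𝒢`. -/
noncomputable def Gmap :
    ((ℝ → ℝ) × (ℝ → ℝ) × (ℝ → ℝ) × (ℝ → ℝ)) →
      ((ℝ → ℝ) × (ℝ → ℝ) × (ℝ → ℝ) × (ℝ → ℝ) × (ℝ → ℝ))
  | (w, pw, φ, pφ) => (deriv w, pw, deriv φ, pφ, fun x => deriv w x - φ x)

/-- Explicit flow-constraint projection `Πᴱ(z₁,z₂,z₃,z₄,z₅) = (z₁,z₂,z₃,0,0)`. -/
def PiE :
    ((ℝ → ℝ) × (ℝ → ℝ) × (ℝ → ℝ) × (ℝ → ℝ) × (ℝ → ℝ)) →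
      ((ℝ → ℝ) × (ℝ → ℝ) × (ℝ → ℝ) × (ℝ → ℝ) × (ℝ → ℝ))
  | (z₁, z₂, z₃, _, _) => (z₁, z₂, z₃, 0, 0)

/-- Explicit-to-implicit inverse transformation `ℱ`. -/
noncomputable def Fmap (a b : ℝ) :
    ((ℝ → ℝ) × (ℝ → ℝ) × (ℝ → ℝ) × (ℝ → ℝ) × (ℝ → ℝ)) →
      ((ℝ → ℝ) × (ℝ → ℝ) × (ℝ → ℝ) × (ℝ → ℝ))
  | (z₁, z₂, z₃, z₄, z₅) =>
    (fun x => (∫ s in a..x, z₁ s) - (1 / (b - a)) * ∫ y in a..b, (∫ s in a..y, z₁ s),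
      z₂, fun x => z₁ x - z₅ x, z₄)

/-- Commutation of flow-constraint projections with the explicit/implicit
transformations: `ℱ ∘ Πᴱ ∘ 𝒢 = Πᴵ`, where `Πᴵ(w,p_w,φ,p_φ) = (w, p_w, ∂ₓw, 0)`. -/
theorem stmt17 (a b : ℝ) (hab : a < b) (w pw φ pφ : ℝ → ℝ)
    (hw : ContDiff ℝ 1 w) (hφ : ContDiff ℝ 1 φ)
    (hmean : (∫ x in a..b, w x) = 0) :
    ∀ x ∈ Set.Icc a b,
      (Fmap a b (PiE (Gmap (w, pw, φ, pφ)))).1 x = w x ∧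
      (Fmap a b (PiE (Gmap (w, pw, φ, pφ)))).2.1 x = pw x ∧
      (Fmap a b (PiE (Gmap (w, pw, φ, pφ)))).2.2.1 x = deriv w x ∧
      (Fmap a b (PiE (Gmap (w, pw, φ, pφ)))).2.2.2 x = 0 := by
  intro x hx
  have hcont : Continuous (deriv w) := (hw.continuous_deriv le_rfl)
  have key : ∀ t : ℝ, (∫ s in a..t, deriv w s) = w t - w a := by
    intro t
    exact intervalIntegral.integral_deriv_eq_sub
      (fun s _ => hw.differentiable one_ne_zero s)
      (hcont.intervalIntegrable a t)
  have h2 : (∫ y in a..b, (∫ s in a..y, deriv w s)) = - ((b - a) * w a) := by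
    have : (∫ y in a..b, (∫ s in a..y, deriv w s)) = ∫ y in a..b, (w y - w a) := by
      apply intervalIntegral.integral_congr
      intro y _; exact key y
    rw [this, intervalIntegral.integral_sub (hw.continuous.intervalIntegrable a b)
      (intervalIntegrable_const), hmean, intervalIntegral.integral_const]
    simp
  refine ⟨?_, rfl, ?_, rfl⟩
  · show (∫ s in a..x, deriv w s) - (1 / (b - a)) * (∫ y in a..b, (∫ s in a..y, deriv w s)) = w x
    rw [key x, h2]
    have hne : b - a ≠ 0 := ne_of_gt (by linarith)
    field_simp
    ring
  · show deriv w x - 0 = deriv w x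
    simp
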